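/- Let λ ∈ ℕ^N be an admissible partition (λ_N ≥ k, λ_i ≥ λ_{i+n}+k for i ≤ N-n). Define Λ⁰ by Λ⁰_{i,j} = λ_j - k if j + i > N + 1, and Λ⁰_{i,j} = max(λ_j - k, λ_{j+i-1}) if j + i ≤ N + 1, for 1 ≤ i ≤ n+1, 1 ≤ j ≤ N (with λ_m = 0 for m > N). Then Λ⁰ is a nonnegative GT pattern of height n and length N with top row Λ⁰₁ = λ and bottom row Λ⁰_{n+1} = λ^↓, i.e., each row is non-increasing, and consecutive rows interlace: Λ⁰_{i,j} ≥ Λ⁰_{i+1,j} ≥ Λ⁰_{i,j+1}. -/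
import Mathlib


/-- Extension of a finite tuple by zero. -/
def extZ {N : ℕ} (f : Fin N → ℕ) (j : ℕ) : ℕ := if h : j < N then f ⟨j, h⟩ else 0

/-- The interlacing relation `α ≥_p β`. -/
def Interlace (p : ℕ) (α β : ℕ → ℕ) : Prop := ∀ j : ℕ, β j ≤ α j ∧ α (j + p) ≤ β j

/-- For an admissible partition `λ`, the array
`Λ⁰_{i,j} = λ_j - k` if `j + i > N + 1`, and `Λ⁰_{i,j} = max(λ_j - k, λ_{j+i-1})` if
`j + i ≤ N + 1` (1-based indices, `λ_m = 0` for `m > N`) is a nonnegative GT pattern of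
height `n` and length `N` with top row `λ` and bottom row `λ↓`: each row is
non-increasing and consecutive rows interlace. -/
theorem statement17 (N n k : ℕ) (hn : 0 < n) (hk : 0 < k)
    (lam : Fin N → ℕ) (hlam : Antitone lam)
    (hadm1 : ∀ i, k ≤ lam i)
    (hadm2 : ∀ i : Fin N, ∀ h : (i : ℕ) + n < N, lam ⟨(i : ℕ) + n, h⟩ + k ≤ lam i)
    (Λ : Fin (n + 1) → Fin N → ℕ)
    (hΛ : ∀ (i : Fin (n + 1)) (j : Fin N),
      Λ i j = if h : (j : ℕ) + (i : ℕ) < N then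
          max (lam j - k) (lam ⟨(j : ℕ) + (i : ℕ), h⟩)
        else lam j - k) :
    (Λ 0 = lam) ∧
    (∀ j, Λ (Fin.last n) j = lam j - k) ∧
    (∀ i, Antitone (Λ i)) ∧
    (∀ i : Fin n, Interlace 1 (extZ (Λ i.castSucc)) (extZ (Λ i.succ))) := by
  refine ⟨?_, ?_, ?_, ?_⟩
  · funext j
    rw [hΛ]
    have h : (j : ℕ) + ((0 : Fin (n + 1)) : ℕ) < N := by simpa using j.isLt
    rw [dif_pos h]
    have he : lam ⟨(j : ℕ) + ((0 : Fin (n + 1)) : ℕ), h⟩ = lam j := by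
      congr 1
    rw [he, Nat.max_eq_right (Nat.sub_le _ _)]
  · intro j
    rw [hΛ]
    split_ifs with h
    · have h' : (j : ℕ) + n < N := by simpa using h
      have := hadm2 j h'
      have hle : lam ⟨(j : ℕ) + ((Fin.last n : Fin (n + 1)) : ℕ), h⟩ ≤ lam j - k := by
        have he : lam ⟨(j : ℕ) + ((Fin.last n : Fin (n + 1)) : ℕ), h⟩ = lam ⟨(j : ℕ) + n, h'⟩ := by
          congr 1
        rw [he]; omega
      exact Nat.max_eq_left hle
    · rfl
  · intro i a b hab
    rw [hΛ, hΛ]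
    have hab' : (a : ℕ) ≤ (b : ℕ) := hab
    split_ifs with hb ha ha
    · exact max_le_max (Nat.sub_le_sub_right (hlam hab) k)
        (hlam (show (⟨(a : ℕ) + i, ha⟩ : Fin N) ≤ ⟨(b : ℕ) + i, hb⟩ by
          simp only [Fin.mk_le_mk]; omega))
    · omega
    · exact le_max_of_le_left (Nat.sub_le_sub_right (hlam hab) k)
    · exact Nat.sub_le_sub_right (hlam hab) k
  · intro i j
    constructor
    · unfold extZ
      split_ifs with hj
      · rw [hΛ, hΛ]
        simp only [Fin.coe_castSucc, Fin.val_succ]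
        split_ifs with hs hc hc
        · exact max_le_max le_rfl
            (hlam (show (⟨(j : ℕ) + (i : ℕ), hc⟩ : Fin N) ≤ ⟨(j : ℕ) + ((i : ℕ) + 1), hs⟩ by
              simp only [Fin.mk_le_mk]; omega))
        · omega
        · exact le_max_left _ _
        · exact le_rfl
      · exact le_rfl
    · unfold extZ
      split_ifs with h1 h2
      · rw [hΛ, hΛ]
        simp only [Fin.coe_castSucc, Fin.val_succ]
        split_ifs with hs hc hc
        · refine max_le_max (Nat.sub_le_sub_right (hlam ?_) k) (le_of_eq ?_)
          · show ((⟨j, h2⟩ : Fin N) ≤ ⟨j + 1, h1⟩); simp only [Fin.mk_le_mk]; omega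
          · congr 1; ext; simp; omega
        · omega
        · omega
        · exact Nat.sub_le_sub_right (hlam (show ((⟨j, h2⟩ : Fin N) ≤ ⟨j + 1, h1⟩) by
            simp only [Fin.mk_le_mk]; omega)) k
      · omega
      · exact Nat.zero_le _
      · exact Nat.zero_le _
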